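/- The number of n×n Hadamard matrices is at most 2^(n(n+1)/2). -/

import Mathlib

open Matrix Set Submodule Module Finset

/-- ±1 vectors orthogonal to k pairwise-orthogonal ±1 vectors: at most 2^(n-k). -/
lemma pm_orth_card {n k : ℕ} (r : Fin k → Fin n → ℝ)
    (hpm : ∀ i j, r i j = 1 ∨ r i j = -1)
    (horth : ∀ i i', i ≠ i' → r i ⬝ᵥ r i' = 0) :
    {v : Fin n → ℝ | (∀ j, v j = 1 ∨ v j = -1) ∧ ∀ i, r i ⬝ᵥ v = 0}.ncard
      ≤ 2 ^ (n - k) := by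
  classical
  set V : Set (Fin n → ℝ) :=
    {v : Fin n → ℝ | (∀ j, v j = 1 ∨ v j = -1) ∧ ∀ i, r i ⬝ᵥ v = 0} with hV
  rcases Nat.eq_zero_or_pos n with hn | hn
  · subst hn
    have hsub : V ⊆ {fun _ => (0:ℝ)} := by
      intro v _; simp only [Set.mem_singleton_iff]
      funext j; exact absurd j.2 (by omega)
    calc V.ncard ≤ ({fun _ => (0:ℝ)} : Set (Fin 0 → ℝ)).ncard :=
            Set.ncard_le_ncard hsub (Set.finite_singleton _)
      _ = 1 := Set.ncard_singleton _
      _ ≤ 2 ^ (0 - k) := Nat.one_le_two_pow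
  -- self dot products are n
  have hself : ∀ i, r i ⬝ᵥ r i = (n : ℝ) := by
    intro i
    have : ∀ j, r i j * r i j = 1 := by
      intro j; rcases hpm i j with h | h <;> rw [h] <;> ring
    simp [dotProduct, this]
  -- rows are linearly independent
  have hli : LinearIndependent ℝ r := by
    rw [Fintype.linearIndependent_iff]
    intro g hg i
    have h0 : ∑ j, g j * (r j ⬝ᵥ r i) = 0 := by
      set f : (Fin n → ℝ) →ₗ[ℝ] ℝ :=
        { toFun := fun w => w ⬝ᵥ r i
          map_add' := fun a b => add_dotProduct a b (r i)
          map_smul' := fun c a => smul_dotProduct c a (r i) } with hf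
      have h1 := congrArg f hg
      rw [map_sum] at h1
      simpa [hf, smul_eq_mul] using h1
    rw [Finset.sum_eq_single i] at h0
    · rw [hself i] at h0
      have : (n : ℝ) ≠ 0 := Nat.cast_ne_zero.mpr (by omega)
      exact (mul_eq_zero.mp h0).resolve_right this
    · intro b _ hb; rw [horth b i hb, mul_zero]
    · simp
  have hrinj : Function.Injective r := hli.injective
  -- extend range r to a basis inside range r ∪ standard basis
  set t : Set (Fin n → ℝ) :=
    Set.range r ∪ Set.range (fun j => (Pi.single j 1 : Fin n → ℝ)) with ht
  have hspan_t : span ℝ t = ⊤ := by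
    rw [eq_top_iff]
    have h := (Pi.basisFun ℝ (Fin n)).span_eq
    have hr : Set.range (Pi.basisFun ℝ (Fin n)) =
        Set.range (fun j => (Pi.single j 1 : Fin n → ℝ)) := by
      ext x; simp [Pi.basisFun_apply]
    rw [hr] at h
    rw [← h]
    exact span_mono Set.subset_union_right
  have hlis : LinearIndepOn ℝ id (Set.range r) :=
    (linearIndepOn_id_range_iff hli.injective).mpr hli
  set B : Set (Fin n → ℝ) := hlis.extend (Set.subset_union_left (t := _)) with hB
  have hBt : B ⊆ t := hlis.extend_subset _
  have hrB : Set.range r ⊆ B := hlis.subset_extend _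
  have hliB : LinearIndependent ℝ ((↑) : B → (Fin n → ℝ)) :=
    hlis.linearIndepOn_extend _
  have hspanB : span ℝ B = ⊤ := by
    rw [hlis.span_extend_eq_span, hspan_t]
  have hBfin : B.Finite :=
    Set.Finite.subset (Set.Finite.union (Set.finite_range _) (Set.finite_range _)) hBt
  -- B has n elements
  haveI : Fintype ↥B := hBfin.fintype
  have hBcard : B.ncard = n := by
    have hb : Module.finrank ℝ (Fin n → ℝ) = Fintype.card ↥B :=
      Module.finrank_eq_card_basis (Basis.mk hliB (by simp [Subtype.range_coe, hspanB]))
    rw [Module.finrank_fin_fun] at hb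
    rw [Set.ncard_eq_toFinset_card', Set.toFinset_card, ← hb]
  -- the coordinate set S
  set S : Set (Fin n) := {j | Pi.single j 1 ∈ B \ Set.range r} with hS
  have hScard : S.ncard ≤ n - k := by
    have hinj : Set.InjOn (fun j => (Pi.single j 1 : Fin n → ℝ)) S := by
      intro a _ b _ hab
      by_contra hne
      have := congrFun hab a
      simp [Pi.single_apply, hne] at this
    have himg : (fun j => (Pi.single j 1 : Fin n → ℝ)) '' S ⊆ B \ Set.range r := by
      rintro x ⟨j, hj, rfl⟩; exact hj
    calc S.ncard = ((fun j => (Pi.single j 1 : Fin n → ℝ)) '' S).ncard :=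
          (Set.ncard_image_of_injOn hinj).symm
      _ ≤ (B \ Set.range r).ncard := Set.ncard_le_ncard himg hBfin.diff
      _ = B.ncard - (Set.range r).ncard := Set.ncard_diff hrB (Set.finite_range _)
      _ = n - k := by
          rw [hBcard, ← Nat.card_coe_set_eq, Nat.card_range_of_injective hrinj,
            Nat.card_eq_fintype_card, Fintype.card_fin]
  -- injection from V into (S → Bool)
  haveI : Fintype ↥S := (Set.toFinite S).fintype
  have key : ∀ v ∈ V, ∀ w ∈ V, (∀ j : ↥S, v j.1 = w j.1) → v = w := by
    rintro v ⟨hv1, hv2⟩ w ⟨hw1, hw2⟩ hvw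
    set d : Fin n → ℝ := v - w with hd
    have hdB : ∀ b ∈ B, b ⬝ᵥ d = 0 := by
      intro b hb
      by_cases hbr : b ∈ Set.range r
      · obtain ⟨i, rfl⟩ := hbr
        simp [hd, dotProduct_sub, hv2 i, hw2 i]
      · rcases hBt hb with hbr' | hbs
        · exact absurd hbr' hbr
        · obtain ⟨j, rfl⟩ := hbs
          have hjS : j ∈ S := ⟨hb, hbr⟩
          have := hvw ⟨j, hjS⟩
          simp [single_dotProduct, hd, this]
    have hdtop : ∀ x : Fin n → ℝ, x ⬝ᵥ d = 0 := by
      intro x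
      have hx : x ∈ span ℝ B := by rw [hspanB]; trivial
      set f : (Fin n → ℝ) →ₗ[ℝ] ℝ :=
        { toFun := fun w => w ⬝ᵥ d
          map_add' := fun a b => add_dotProduct a b d
          map_smul' := fun c a => smul_dotProduct c a d } with hf
      have : span ℝ B ≤ LinearMap.ker f := by
        rw [span_le]; intro b hb; exact hdB b hb
      exact this hx
    have hdd : d ⬝ᵥ d = 0 := hdtop d
    have : d = 0 := by
      funext j
      have hnn : ∀ i ∈ Finset.univ, (0:ℝ) ≤ d i * d i := fun i _ => mul_self_nonneg _
      have := (Finset.sum_eq_zero_iff_of_nonneg hnn).mp hdd j (Finset.mem_univ j)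
      exact mul_self_eq_zero.mp this
    have := sub_eq_zero.mp this
    exact this
  -- now count
  have hinj2 : Set.InjOn (fun v => fun j : ↥S => decide (v j.1 = 1)) V := by
    intro v hv w hw hvw
    refine key v hv w hw ?_
    intro j
    have := congrFun hvw j
    simp only [decide_eq_decide] at this
    rcases hv.1 j.1 with h1 | h1 <;> rcases hw.1 j.1 with h2 | h2 <;>
      simp [h1, h2] at this ⊢ <;> tauto
  calc V.ncard = ((fun v => fun j : ↥S => decide (v j.1 = 1)) '' V).ncard :=
        (Set.ncard_image_of_injOn hinj2).symm
    _ ≤ (Set.univ : Set (↥S → Bool)).ncard :=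
        Set.ncard_le_ncard (Set.subset_univ _) Set.finite_univ
    _ = 2 ^ S.ncard := by
        rw [Set.ncard_univ, Nat.card_eq_fintype_card, Fintype.card_fun,
          Fintype.card_bool, Set.ncard_eq_toFinset_card', Set.toFinset_card]
    _ ≤ 2 ^ (n - k) := Nat.pow_le_pow_right (by norm_num) hScard

/-- partial Hadamard matrices: k pairwise-orthogonal ±1 rows of length n -/
def padSet (n k : ℕ) : Set (Fin k → Fin n → ℝ) :=
  {M | (∀ i j, M i j = 1 ∨ M i j = -1) ∧ ∀ i i', i ≠ i' → M i ⬝ᵥ M i' = 0}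

lemma padSet_finite (n k : ℕ) : (padSet n k).Finite := by
  have h : padSet n k ⊆ Set.pi Set.univ
      (fun _ : Fin k => Set.pi Set.univ (fun _ : Fin n => ({1, -1} : Set ℝ))) := by
    intro M hM i _ j _
    rcases hM.1 i j with h | h <;> simp [h]
  exact Set.Finite.subset
    (Set.Finite.pi fun _ => Set.Finite.pi fun _ =>
      (Set.finite_singleton _).insert _) h

lemma pm_finite (n k : ℕ) (r : Fin k → Fin n → ℝ) :
    ({v : Fin n → ℝ | (∀ j, v j = 1 ∨ v j = -1) ∧ ∀ i, r i ⬝ᵥ v = 0}).Finite := by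
  apply Set.Finite.subset
    (Set.Finite.pi (fun _ : Fin n => (Set.finite_singleton (-1:ℝ)).insert 1))
  intro v hv j _
  rcases hv.1 j with h | h <;> simp [h]

lemma padSet_step (n k : ℕ) :
    (padSet n (k+1)).ncard ≤ 2 ^ (n - k) * (padSet n k).ncard := by
  classical
  set f : (Fin (k+1) → Fin n → ℝ) → (Fin k → Fin n → ℝ) :=
    fun M => M ∘ Fin.castSucc with hf
  have hmaps : ∀ M ∈ padSet n (k+1), f M ∈ padSet n k := by
    rintro M ⟨h1, h2⟩
    exact ⟨fun i j => h1 _ j, fun i i' hii =>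
      h2 _ _ (fun h => hii (Fin.castSucc_injective _ h))⟩
  set s := (padSet_finite n (k+1)).toFinset with hs
  set t := (padSet_finite n k).toFinset with hts
  have hmaps' : ∀ M ∈ s, f M ∈ t := by
    intro M hM
    rw [Set.Finite.mem_toFinset] at *
    exact hmaps M hM
  have hcard : s.card ≤ 2 ^ (n - k) * t.card := by
    apply Finset.card_le_mul_card_image_of_maps_to hmaps'
    intro N hN
    rw [Set.Finite.mem_toFinset] at hN
    -- the fiber injects into ±1 vectors orthogonal to rows of N
    set V : Set (Fin n → ℝ) :=
      {v : Fin n → ℝ | (∀ j, v j = 1 ∨ v j = -1) ∧ ∀ i, N i ⬝ᵥ v = 0} with hV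
    have hVfin : V.Finite := pm_finite n k N
    have hVcard : V.ncard ≤ 2 ^ (n - k) := pm_orth_card N hN.1 hN.2
    have : (Finset.filter (fun M => f M = N) s).card ≤ hVfin.toFinset.card := by
      apply Finset.card_le_card_of_injOn (fun M => M (Fin.last k))
      · intro M hM
        simp only [Finset.mem_coe, Finset.mem_filter] at hM
        obtain ⟨hMs, hMN⟩ := hM
        rw [hs, Set.Finite.mem_toFinset] at hMs
        rw [Finset.mem_coe, Set.Finite.mem_toFinset]
        refine ⟨fun j => hMs.1 _ j, fun i => ?_⟩
        have : N i = M i.castSucc := by rw [← hMN]; rfl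
        rw [this]
        exact hMs.2 _ _ (fun h => by
          have := congrArg Fin.val h
          simp at this; omega)
      · intro M hM M' hM' hMM
        simp only [Finset.mem_coe, Finset.mem_filter] at hM hM'
        funext i
        refine Fin.lastCases ?_ ?_ i
        · exact hMM
        · intro i
          have := congrFun (hM.2.trans hM'.2.symm) i
          exact this
    calc (Finset.filter (fun M => f M = N) s).card ≤ hVfin.toFinset.card := this
      _ = V.ncard := by rw [Set.ncard_eq_toFinset_card _ hVfin]
      _ ≤ 2 ^ (n - k) := hVcard
  calc (padSet n (k+1)).ncard = s.card := by rw [hs, Set.ncard_eq_toFinset_card _ (padSet_finite n (k+1))]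
    _ ≤ 2 ^ (n - k) * t.card := hcard
    _ = 2 ^ (n - k) * (padSet n k).ncard := by rw [hts, Set.ncard_eq_toFinset_card _ (padSet_finite n k)]

lemma padSet_card (n : ℕ) : ∀ k, (padSet n k).ncard ≤ 2 ^ (∑ i ∈ Finset.range k, (n - i)) := by
  intro k
  induction k with
  | zero =>
    have : padSet n 0 ⊆ {fun i _ => (0:ℝ)} := by
      intro M _
      simp only [Set.mem_singleton_iff]
      funext i; exact i.elim0
    calc (padSet n 0).ncard ≤ _ := Set.ncard_le_ncard this (Set.finite_singleton _)
      _ = 1 := Set.ncard_singleton _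
      _ ≤ _ := Nat.one_le_two_pow
  | succ k ih =>
    calc (padSet n (k+1)).ncard ≤ 2 ^ (n - k) * (padSet n k).ncard := padSet_step n k
      _ ≤ 2 ^ (n - k) * 2 ^ (∑ i ∈ Finset.range k, (n - i)) := by
          exact Nat.mul_le_mul_left _ ih
      _ = 2 ^ (∑ i ∈ Finset.range (k+1), (n - i)) := by
          rw [← pow_add, Finset.sum_range_succ]; ring_nf

theorem stmt_2 (n : ℕ) :
    Set.ncard {H : Matrix (Fin n) (Fin n) ℝ |
      (∀ i j, H i j = 1 ∨ H i j = -1) ∧ H * H.transpose = (n : ℝ) • 1}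
      ≤ 2 ^ (n * (n + 1) / 2) := by
  have hsum : ∑ i ∈ Finset.range n, (n - i) = n * (n + 1) / 2 := by
    have h1 : ∑ i ∈ Finset.range n, (n - i) = ∑ i ∈ Finset.range n, (i + 1) := by
      rw [← Finset.sum_range_reflect (fun i => n - i) n]
      apply Finset.sum_congr rfl
      intro j hj
      rw [Finset.mem_range] at hj
      omega
    have h2 : ∑ i ∈ Finset.range n, (i + 1) = ∑ i ∈ Finset.range (n+1), i := by
      rw [Finset.sum_range_succ' (fun i => i) n]
      simp
    have h3 := Finset.sum_range_id_mul_two (n+1)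
    simp only [Nat.add_sub_cancel] at h3
    have h5 : (∑ i ∈ Finset.range (n+1), i) * 2 = n * (n+1) := by rw [h3]; ring
    rw [h1, h2]
    obtain ⟨m, hm⟩ : ∃ m, n * (n+1) = m := ⟨_, rfl⟩
    rw [hm] at h5 ⊢
    omega
  have hsub : {H : Matrix (Fin n) (Fin n) ℝ |
      (∀ i j, H i j = 1 ∨ H i j = -1) ∧ H * H.transpose = (n : ℝ) • 1} ⊆ padSet n n := by
    rintro H ⟨h1, h2⟩
    refine ⟨h1, fun i i' hii => ?_⟩
    have := congrFun (congrFun h2 i) i'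
    simp only [Matrix.mul_apply, Matrix.transpose_apply, Matrix.smul_apply, Matrix.one_apply,
      if_neg hii, smul_eq_mul, mul_zero] at this
    simpa [dotProduct] using this
  have hle : ({H : Matrix (Fin n) (Fin n) ℝ |
      (∀ i j, H i j = 1 ∨ H i j = -1) ∧ H * H.transpose = (n : ℝ) • 1}).ncard
      ≤ (padSet n n).ncard := Set.ncard_le_ncard hsub (padSet_finite n n)
  calc _ ≤ (padSet n n).ncard := hle
    _ ≤ 2 ^ (∑ i ∈ Finset.range n, (n - i)) := padSet_card n n
    _ = 2 ^ (n * (n + 1) / 2) := by rw [hsum]
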